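/- Let μ ∈ ℝ, σ > 0, t ∈ ℝ, λ > (μ−t)₋, and m = μ − t + λ > 0. For δ ∈ (0,1) let F_δ be the two-point distribution P(X = μ − σ√(δ/(1−δ))) = 1−δ, P(X = μ + σ√((1−δ)/δ)) = δ. Then F_δ has mean μ and variance σ², and as δ → 0, E^{F_δ}[(X−t)₋²] → ((μ−t)₋)² and E^{F_δ}[(X−t)₊] → (μ−t)₊ < m; consequently for sufficiently small δ, F_δ lies in the set of distributions with mean μ, variance σ², and E[(X−t)₊] ≤ m. -/

import Mathlib

open MeasureTheory

/-- The two-point distribution `F_δ` placing mass `1-δ` at `μ - σ√(δ/(1-δ))`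
and mass `δ` at `μ + σ√((1-δ)/δ)`. -/
noncomputable def Fdelta (μ σ δ : ℝ) : Measure ℝ :=
  ENNReal.ofReal (1 - δ) • Measure.dirac (μ - σ * Real.sqrt (δ / (1 - δ)))
    + ENNReal.ofReal δ • Measure.dirac (μ + σ * Real.sqrt ((1 - δ) / δ))

lemma integral_Fdelta (μ σ δ : ℝ) (h0 : 0 ≤ δ) (h1 : δ ≤ 1) (f : ℝ → ℝ) :
    ∫ x, f x ∂(Fdelta μ σ δ)
      = (1 - δ) * f (μ - σ * Real.sqrt (δ / (1 - δ)))
        + δ * f (μ + σ * Real.sqrt ((1 - δ) / δ)) := by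
  have hi : ∀ (e : ℝ), 0 ≤ e → ∀ (p : ℝ),
      Integrable f (ENNReal.ofReal e • Measure.dirac p) := by
    intro e he p
    refine Integrable.smul_measure ?_ ENNReal.ofReal_ne_top
    refine (integrable_const (f p)).congr ?_
    rw [ae_dirac_eq]
    exact Filter.eventually_pure.2 rfl
  rw [Fdelta, integral_add_measure (hi _ (by linarith) _) (hi _ h0 _),
    integral_smul_measure, integral_smul_measure, integral_dirac, integral_dirac,
    ENNReal.toReal_ofReal (by linarith), ENNReal.toReal_ofReal h0]
  simp [smul_eq_mul]

lemma sqrt_facts (δ : ℝ) (h0 : 0 < δ) (h1 : δ < 1) :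
    (1 - δ) * Real.sqrt (δ / (1 - δ)) = Real.sqrt (δ * (1 - δ)) ∧
    δ * Real.sqrt ((1 - δ) / δ) = Real.sqrt (δ * (1 - δ)) := by
  constructor
  · rw [show δ * (1 - δ) = (1 - δ) ^ 2 * (δ / (1 - δ)) by
        rw [sq]; field_simp,
      Real.sqrt_mul (sq_nonneg _), Real.sqrt_sq (by linarith)]
  · rw [show δ * (1 - δ) = δ ^ 2 * ((1 - δ) / δ) by rw [sq]; field_simp,
      Real.sqrt_mul (sq_nonneg _), Real.sqrt_sq (by linarith)]

theorem stmt_19 (μ σ t lam m : ℝ) (hσ : 0 < σ) (hlam : max (t - μ) 0 < lam)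
    (hm : m = μ - t + lam) :
    0 < m ∧
    (∀ δ ∈ Set.Ioo (0 : ℝ) 1,
      IsProbabilityMeasure (Fdelta μ σ δ) ∧
      (∫ x, x ∂(Fdelta μ σ δ)) = μ ∧
      (∫ x, x ^ 2 ∂(Fdelta μ σ δ)) = μ ^ 2 + σ ^ 2) ∧
    Filter.Tendsto (fun δ : ℝ => ∫ x, (max (t - x) 0) ^ 2 ∂(Fdelta μ σ δ))
      (nhdsWithin 0 (Set.Ioi 0)) (nhds ((max (t - μ) 0) ^ 2)) ∧
    Filter.Tendsto (fun δ : ℝ => ∫ x, max (x - t) 0 ∂(Fdelta μ σ δ))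
      (nhdsWithin 0 (Set.Ioi 0)) (nhds (max (μ - t) 0)) ∧
    max (μ - t) 0 < m ∧
    (∃ δ₀ > 0, ∀ δ ∈ Set.Ioo (0 : ℝ) δ₀,
      (∫ x, max (x - t) 0 ∂(Fdelta μ σ δ)) ≤ m) := by
  have htμ : t - μ < lam := lt_of_le_of_lt (le_max_left _ _) hlam
  have hlam0 : 0 < lam := lt_of_le_of_lt (le_max_right _ _) hlam
  have hm0 : 0 < m := by rw [hm]; linarith
  have hmax : max (μ - t) 0 < m := by
    rw [max_lt_iff]; constructor <;> [linarith; exact hm0]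
  have hIoo : Set.Ioo (0 : ℝ) 1 ∈ nhdsWithin (0 : ℝ) (Set.Ioi 0) :=
    Ioo_mem_nhdsGT_of_mem (by norm_num)
  -- convergence of √(δ/(1-δ)) to 0
  have hv : Filter.Tendsto (fun δ : ℝ => Real.sqrt (δ / (1 - δ))) (nhds 0) (nhds 0) := by
    have hdiv : Filter.Tendsto (fun δ : ℝ => δ / (1 - δ)) (nhds 0) (nhds 0) := by
      have : ContinuousAt (fun δ : ℝ => δ / (1 - δ)) 0 :=
        ContinuousAt.div continuousAt_id (by fun_prop) (by norm_num)
      simpa using this.tendsto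
    have hs : ContinuousAt Real.sqrt 0 := Real.continuous_sqrt.continuousAt
    simpa [Real.sqrt_zero, Function.comp_def] using hs.tendsto.comp hdiv
  -- third claim: tendsto of ∫ (max (t-x) 0)^2
  have hT1 : Filter.Tendsto (fun δ : ℝ => ∫ x, (max (t - x) 0) ^ 2 ∂(Fdelta μ σ δ))
      (nhdsWithin 0 (Set.Ioi 0)) (nhds ((max (t - μ) 0) ^ 2)) := by
    have hA : Filter.Tendsto
        (fun δ : ℝ => (1 - δ) * (max (t - (μ - σ * Real.sqrt (δ / (1 - δ)))) 0) ^ 2)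
        (nhds 0) (nhds ((max (t - μ) 0) ^ 2)) := by
      have h : Filter.Tendsto
          (fun δ : ℝ => (1 - δ) * (max (t - (μ - σ * Real.sqrt (δ / (1 - δ)))) 0) ^ 2)
          (nhds (0:ℝ)) (nhds ((1 - 0) * (max (t - (μ - σ * 0)) 0) ^ 2)) :=
        Filter.Tendsto.mul (tendsto_const_nhds.sub Filter.tendsto_id)
          (Filter.Tendsto.pow (Filter.Tendsto.max
            (tendsto_const_nhds.sub (tendsto_const_nhds.sub (tendsto_const_nhds.mul hv)))
            tendsto_const_nhds) 2)
      simpa using h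
    have hB : Filter.Tendsto
        (fun δ : ℝ => δ * (max (t - (μ + σ * Real.sqrt ((1 - δ) / δ))) 0) ^ 2)
        (nhdsWithin 0 (Set.Ioi 0)) (nhds 0) := by
      apply squeeze_zero' (g := fun δ : ℝ => δ * (max (t - μ) 0) ^ 2)
      · filter_upwards [hIoo] with δ hδ
        exact mul_nonneg hδ.1.le (by positivity)
      · filter_upwards [hIoo] with δ hδ
        apply mul_le_mul_of_nonneg_left _ hδ.1.le
        apply pow_le_pow_left₀ (le_max_right _ _)
        apply max_le_max_right
        have : 0 ≤ σ * Real.sqrt ((1 - δ) / δ) := by positivity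
        linarith
      · have : Filter.Tendsto (fun δ : ℝ => δ * (max (t - μ) 0) ^ 2) (nhds 0)
            (nhds (0 * (max (t - μ) 0) ^ 2)) := Filter.tendsto_id.mul tendsto_const_nhds
        simpa using this.mono_left nhdsWithin_le_nhds
    have hsum := (hA.mono_left nhdsWithin_le_nhds).add hB
    rw [add_zero] at hsum
    refine hsum.congr' ?_
    filter_upwards [hIoo] with δ hδ
    rw [integral_Fdelta μ σ δ hδ.1.le hδ.2.le (fun x => (max (t - x) 0) ^ 2)]
  -- fourth claim: tendsto of ∫ max (x-t) 0
  have hT2 : Filter.Tendsto (fun δ : ℝ => ∫ x, max (x - t) 0 ∂(Fdelta μ σ δ))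
      (nhdsWithin 0 (Set.Ioi 0)) (nhds (max (μ - t) 0)) := by
    have hA : Filter.Tendsto
        (fun δ : ℝ => (1 - δ) * max ((μ - σ * Real.sqrt (δ / (1 - δ))) - t) 0)
        (nhds 0) (nhds (max (μ - t) 0)) := by
      have h : Filter.Tendsto
          (fun δ : ℝ => (1 - δ) * max ((μ - σ * Real.sqrt (δ / (1 - δ))) - t) 0)
          (nhds (0:ℝ)) (nhds ((1 - 0) * max ((μ - σ * 0) - t) 0)) :=
        Filter.Tendsto.mul (tendsto_const_nhds.sub Filter.tendsto_id)
          (Filter.Tendsto.max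
            ((tendsto_const_nhds.sub (tendsto_const_nhds.mul hv)).sub tendsto_const_nhds)
            tendsto_const_nhds)
      simpa using h
    have hB : Filter.Tendsto
        (fun δ : ℝ => δ * max ((μ + σ * Real.sqrt ((1 - δ) / δ)) - t) 0)
        (nhdsWithin 0 (Set.Ioi 0)) (nhds 0) := by
      apply squeeze_zero' (g := fun δ : ℝ => δ * |μ - t| + σ * Real.sqrt δ)
      · filter_upwards [hIoo] with δ hδ
        exact mul_nonneg hδ.1.le (le_max_right _ _)
      · filter_upwards [hIoo] with δ hδ
        have hr := (sqrt_facts δ hδ.1 hδ.2).2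
        have hrs : Real.sqrt (δ * (1 - δ)) ≤ Real.sqrt δ :=
          Real.sqrt_le_sqrt (by nlinarith [hδ.1.le, hδ.2.le])
        have hb : max ((μ + σ * Real.sqrt ((1 - δ) / δ)) - t) 0
            ≤ |μ - t| + σ * Real.sqrt ((1 - δ) / δ) := by
          apply max_le
          · have : μ - t ≤ |μ - t| := le_abs_self _
            linarith
          · have h1 : 0 ≤ |μ - t| := abs_nonneg _
            have h2 : 0 ≤ σ * Real.sqrt ((1 - δ) / δ) := by positivity
            linarith
        calc δ * max ((μ + σ * Real.sqrt ((1 - δ) / δ)) - t) 0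
            ≤ δ * (|μ - t| + σ * Real.sqrt ((1 - δ) / δ)) :=
              mul_le_mul_of_nonneg_left hb hδ.1.le
          _ = δ * |μ - t| + σ * (δ * Real.sqrt ((1 - δ) / δ)) := by ring
          _ = δ * |μ - t| + σ * Real.sqrt (δ * (1 - δ)) := by rw [hr]
          _ ≤ δ * |μ - t| + σ * Real.sqrt δ := by nlinarith
      · have : Filter.Tendsto (fun δ : ℝ => δ * |μ - t| + σ * Real.sqrt δ) (nhds 0)
            (nhds (0 * |μ - t| + σ * Real.sqrt 0)) := by
          apply Filter.Tendsto.add (Filter.tendsto_id.mul tendsto_const_nhds)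
          exact tendsto_const_nhds.mul (Real.continuous_sqrt.continuousAt.tendsto)
        simpa using this.mono_left nhdsWithin_le_nhds
    have hsum := (hA.mono_left nhdsWithin_le_nhds).add hB
    rw [add_zero] at hsum
    refine hsum.congr' ?_
    filter_upwards [hIoo] with δ hδ
    rw [integral_Fdelta μ σ δ hδ.1.le hδ.2.le (fun x => max (x - t) 0)]
  refine ⟨hm0, ?_, hT1, hT2, hmax, ?_⟩
  · -- moments
    rintro δ ⟨hδ0, hδ1⟩
    have h1δ : (0:ℝ) < 1 - δ := by linarith
    have hs := (sqrt_facts δ hδ0 hδ1).1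
    have hr := (sqrt_facts δ hδ0 hδ1).2
    have hs2 : (1 - δ) * Real.sqrt (δ / (1 - δ)) ^ 2 = δ := by
      rw [Real.sq_sqrt (by positivity)]; field_simp
    have hr2 : δ * Real.sqrt ((1 - δ) / δ) ^ 2 = 1 - δ := by
      rw [Real.sq_sqrt (by positivity)]; field_simp
    refine ⟨⟨?_⟩, ?_, ?_⟩
    · simp only [Fdelta, Measure.add_apply, Measure.smul_apply, measure_univ, smul_eq_mul,
        mul_one]
      rw [← ENNReal.ofReal_add (by linarith) hδ0.le]
      norm_num
    · rw [integral_Fdelta μ σ δ hδ0.le hδ1.le (fun x => x)]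
      linear_combination (-σ) * hs + σ * hr
    · rw [integral_Fdelta μ σ δ hδ0.le hδ1.le (fun x => x ^ 2)]
      linear_combination (-2 * μ * σ) * hs + (2 * μ * σ) * hr + σ ^ 2 * hs2 + σ ^ 2 * hr2
  · -- existence of δ₀
    have hev : ∀ᶠ δ in nhdsWithin (0:ℝ) (Set.Ioi 0),
        (∫ x, max (x - t) 0 ∂(Fdelta μ σ δ)) ≤ m :=
      (hT2.eventually_lt_const hmax).mono fun δ h => h.le
    rw [eventually_nhdsWithin_iff, Metric.eventually_nhds_iff] at hev
    obtain ⟨ε, hε, hball⟩ := hev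
    refine ⟨ε, hε, fun δ hδ => ?_⟩
    exact hball (by simpa [Real.dist_eq, abs_of_pos hδ.1] using hδ.2) hδ.1
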